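/- Let c > 0 and let V : ℝ → ℝ be a differentiable function with V(t) ≥ 0 for all t ≥ 0 and V'(t) ≤ −c·√(V(t)) for all t ≥ 0. Then √(V(t)) ≤ √(V(0)) − (c/2)·t for all t in the interval [0, 2√(V(0))/c], and consequently V(t) = 0 for all t ≥ 2√(V(0))/c. -/

import Mathlib

/-- Finite-time convergence via the comparison lemma.  If `c > 0`
and `V : ℝ → ℝ` is differentiable with `V(t) ≥ 0` and `V'(t) ≤ −c√(V(t))` for
all `t ≥ 0`, then `√(V(t)) ≤ √(V(0)) − (c/2)t` on `[0, 2√(V(0))/c]`, and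
`V(t) = 0` for all `t ≥ 2√(V(0))/c`. -/
theorem finite_time_convergence
    (c : ℝ) (hc : 0 < c)
    (V : ℝ → ℝ) (hV : Differentiable ℝ V)
    (hVnonneg : ∀ t : ℝ, 0 ≤ t → 0 ≤ V t)
    (hV' : ∀ t : ℝ, 0 ≤ t → deriv V t ≤ -c * Real.sqrt (V t)) :
    (∀ t ∈ Set.Icc (0 : ℝ) (2 * Real.sqrt (V 0) / c),
        Real.sqrt (V t) ≤ Real.sqrt (V 0) - (c / 2) * t) ∧
    (∀ t : ℝ, 2 * Real.sqrt (V 0) / c ≤ t → V t = 0) := by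
  have hanti : AntitoneOn V (Set.Ici 0) := by
    apply antitoneOn_of_deriv_nonpos (convex_Ici 0) hV.continuous.continuousOn
      hV.differentiableOn
    intro x hx
    rw [interior_Ici] at hx
    have h1 := hV' x hx.le
    have h0 : 0 ≤ Real.sqrt (V x) := Real.sqrt_nonneg _
    nlinarith
  set T := 2 * Real.sqrt (V 0) / c with hT
  have hTnn : 0 ≤ T := by positivity
  have main : ∀ t ∈ Set.Icc (0:ℝ) T, Real.sqrt (V t) ≤ Real.sqrt (V 0) - (c / 2) * t := by
    rintro t ⟨ht0, htT⟩
    have hct : c / 2 * t ≤ Real.sqrt (V 0) := by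
      rw [hT, le_div_iff₀ hc] at htT
      linarith
    by_cases hVt : V t = 0
    · rw [hVt, Real.sqrt_zero]; linarith
    · have hVtpos : 0 < V t := lt_of_le_of_ne (hVnonneg t ht0) (Ne.symm hVt)
      have hpos : ∀ s ∈ Set.Icc (0:ℝ) t, 0 < V s := fun s hs =>
        lt_of_lt_of_le hVtpos (hanti (Set.mem_Ici.mpr hs.1) (Set.mem_Ici.mpr ht0) hs.2)
      set f : ℝ → ℝ := fun s => Real.sqrt (V s) + c / 2 * s with hf
      have hderiv : ∀ s ∈ Set.Ioo (0:ℝ) t,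
          HasDerivAt f (1 / (2 * Real.sqrt (V s)) * deriv V s + c / 2) s := by
        intro s hs
        have hVs : V s ≠ 0 := ne_of_gt (hpos s ⟨hs.1.le, hs.2.le⟩)
        have h1 : HasDerivAt (fun u => Real.sqrt (V u))
            (1 / (2 * Real.sqrt (V s)) * deriv V s) s :=
          (Real.hasDerivAt_sqrt hVs).comp s (hV s).hasDerivAt
        have h2 : HasDerivAt (fun u : ℝ => c / 2 * u) (c / 2) s := by
          simpa using (hasDerivAt_id s).const_mul (c / 2)
        exact h1.add h2
      have hfanti : AntitoneOn f (Set.Icc 0 t) := by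
        apply antitoneOn_of_deriv_nonpos (convex_Icc 0 t)
        · exact ((Real.continuous_sqrt.comp hV.continuous).add
            (continuous_const.mul continuous_id)).continuousOn
        · intro x hx
          rw [interior_Icc] at hx
          exact (hderiv x hx).differentiableAt.differentiableWithinAt
        · intro x hx
          rw [interior_Icc] at hx
          rw [(hderiv x hx).deriv]
          have hsx : 0 < Real.sqrt (V x) := Real.sqrt_pos.mpr (hpos x ⟨hx.1.le, hx.2.le⟩)
          have h3 := hV' x hx.1.le
          have h4 : 1 / (2 * Real.sqrt (V x)) * deriv V x
              ≤ 1 / (2 * Real.sqrt (V x)) * (-c * Real.sqrt (V x)) := by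
            apply mul_le_mul_of_nonneg_left h3
            positivity
          have h5 : 1 / (2 * Real.sqrt (V x)) * (-c * Real.sqrt (V x)) = -(c / 2) := by
            field_simp
          linarith
      have hft := hfanti (Set.left_mem_Icc.mpr ht0) ⟨ht0, le_refl t⟩ ht0
      simp only [hf, mul_zero, add_zero] at hft
      linarith
  refine ⟨main, ?_⟩
  have hVT : V T = 0 := by
    have h1 := main T ⟨hTnn, le_refl T⟩
    have h0 : 0 ≤ Real.sqrt (V T) := Real.sqrt_nonneg _
    have h2 : c / 2 * T = Real.sqrt (V 0) := by
      rw [hT]; field_simp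
    have h3 : Real.sqrt (V T) = 0 := by linarith
    have := Real.sqrt_eq_zero (hVnonneg T hTnn) |>.mp h3
    exact this
  intro t ht
  have h1 : V t ≤ V T := hanti (Set.mem_Ici.mpr hTnn) (Set.mem_Ici.mpr (hTnn.trans ht)) ht
  linarith [hVnonneg t (hTnn.trans ht)]
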